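/- Let ε_1,...,ε_n be independent Rademacher random variables (each ±1 with probability 1/2). Then E|Σ_{i=1}^n ε_i| ≥ √(n/2). -/

import Mathlib

open Finset

lemma key_binom : ∀ m : ℕ, 1 ≤ m → (16:ℕ)^m ≤ 4 * m * (Nat.centralBinom m)^2 := by
  intro m hm
  induction m with
  | zero => omega
  | succ k ih =>
    rcases Nat.eq_zero_or_pos k with hk | hk
    · subst hk; simp [Nat.centralBinom]
    · have h1 := ih hk
      have h2 := Nat.succ_mul_centralBinom_succ k
      have key : 4 * (k+1) * Nat.centralBinom (k+1) ^ 2 * (k+1) =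
          4 * (2*(2*k+1))^2 * Nat.centralBinom k ^ 2 := by
        have : ((k+1) * Nat.centralBinom (k+1))^2 = (2*(2*k+1)*Nat.centralBinom k)^2 := by
          rw [h2]
        ring_nf
        ring_nf at this
        nlinarith [this]
      have step1 : 16^(k+1) * (k+1) ≤ 16 * (k+1) * (4 * k * Nat.centralBinom k ^ 2) := by
        have : 16^(k+1) = 16 * 16^k := pow_succ' 16 k
        rw [this]
        nlinarith [h1]
      have step2 : 16 * (k+1) * (4 * k * Nat.centralBinom k ^ 2) ≤
          4 * (2*(2*k+1))^2 * Nat.centralBinom k ^ 2 := by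
        nlinarith [Nat.centralBinom_pos k, sq_nonneg (Nat.centralBinom k)]
      have : 16^(k+1) * (k+1) ≤ 4 * (k+1) * Nat.centralBinom (k+1) ^ 2 * (k+1) := by
        rw [key]; exact le_trans step1 step2
      exact Nat.le_of_mul_le_mul_right this (by omega)


noncomputable def Afun (n : ℕ) : ℝ := ∑ ε : Fin n → Bool, |∑ i, (if ε i then (1:ℝ) else -1)|

def Sz (n : ℕ) (ε : Fin n → Bool) : ℤ := ∑ i, (if ε i then 1 else -1)

def Zc (n : ℕ) : ℕ := (Finset.univ.filter (fun ε : Fin n → Bool => Sz n ε = 0)).card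

lemma Sz_cast (n : ℕ) (ε : Fin n → Bool) :
    ((Sz n ε : ℤ) : ℝ) = ∑ i, (if ε i then (1:ℝ) else -1) := by
  simp [Sz, apply_ite (Int.cast : ℤ → ℝ)]

lemma abs_aux (z : ℤ) :
    |((z:ℝ) + 1)| + |((z:ℝ) - 1)| = 2 * |(z:ℝ)| + (if z = 0 then 2 else 0) := by
  rcases lt_trichotomy z 0 with h | h | h
  · have hz : (z:ℝ) ≤ -1 := by
      have : z ≤ -1 := by omega
      exact_mod_cast this
    rw [if_neg (by omega), abs_of_nonpos (by linarith), abs_of_nonpos (by linarith),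
      abs_of_nonpos (by linarith)]
    ring
  · subst h; norm_num
  · have hz : (1:ℝ) ≤ (z:ℝ) := by exact_mod_cast h
    rw [if_neg (by omega), abs_of_nonneg (by linarith), abs_of_nonneg (by linarith),
      abs_of_nonneg (by linarith)]
    ring

lemma A_succ (n : ℕ) : Afun (n + 1) = 2 * Afun n + 2 * Zc n := by
  have h1 : Afun (n+1) = ∑ p : Bool × (Fin n → Bool),
      |(if p.1 then (1:ℝ) else -1) + ∑ i, (if p.2 i then (1:ℝ) else -1)| := by
    rw [Afun, ← Equiv.sum_comp (Fin.consEquiv (fun _ : Fin (n+1) => Bool))]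
    apply Finset.sum_congr rfl
    intro p _
    rw [Fin.sum_univ_succ]
    simp [Fin.consEquiv]
  rw [h1, Fintype.sum_prod_type, Fintype.sum_bool]
  have h2 : ∀ ε : Fin n → Bool,
      |(1:ℝ) + ∑ i, (if ε i then (1:ℝ) else -1)| + |(-1:ℝ) + ∑ i, (if ε i then (1:ℝ) else -1)|
        = 2 * |∑ i, (if ε i then (1:ℝ) else -1)| + (if Sz n ε = 0 then 2 else 0) := by
    intro ε
    have := abs_aux (Sz n ε)
    rw [Sz_cast] at this
    rw [← this]
    ring_nf
  simp only [if_true, Bool.false_eq_true, if_false]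
  rw [← Finset.sum_add_distrib, Finset.sum_congr rfl (fun ε _ => h2 ε), Finset.sum_add_distrib,
    ← Finset.mul_sum]
  have h3 : ∑ ε : Fin n → Bool, (if Sz n ε = 0 then (2:ℝ) else 0) = 2 * Zc n := by
    simp [Finset.sum_ite, Zc, mul_comm]
  rw [h3, Afun]

lemma Sz_eq (n : ℕ) (ε : Fin n → Bool) :
    Sz n ε = 2 * ((Finset.univ.filter (fun i => ε i = true)).card : ℤ) - n := by
  rw [Sz, Finset.sum_congr rfl (fun i _ =>
    show (if ε i then (1:ℤ) else -1) = 2 * (if ε i then 1 else 0) - 1 by split <;> ring)]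
  rw [Finset.sum_sub_distrib, ← Finset.mul_sum, Finset.sum_boole, Finset.sum_const]
  simp

lemma Zc_even (m : ℕ) : Nat.centralBinom m ≤ Zc (2 * m) := by
  classical
  have key : ((Finset.univ.powersetCard m : Finset (Finset (Fin (2*m)))).card) ≤ Zc (2*m) := by
    apply Finset.card_le_card_of_injOn (fun s => fun i => decide (i ∈ s))
    · intro s hs
      rw [Finset.mem_coe, Finset.mem_powersetCard_univ] at hs
      simp only [Zc, Finset.mem_coe, Finset.mem_filter, Finset.mem_univ, true_and]
      rw [Sz_eq]
      simp only [decide_eq_true_eq]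
      rw [Finset.filter_univ_mem, hs]
      push_cast; ring
    · intro s _ t _ h
      ext i
      have := congrFun h i
      simpa using this
  rwa [Finset.card_powersetCard, Finset.card_univ, Fintype.card_fin, ← Nat.centralBinom] at key

lemma binom_sqrt (m : ℕ) :
    (4:ℝ)^m ≤ (Nat.centralBinom m : ℝ) * (Real.sqrt (m+1) + Real.sqrt m) := by
  rcases Nat.eq_zero_or_pos m with h | h
  · subst h; simp [Nat.centralBinom]
  · have h1 : ((16:ℝ))^m ≤ 4 * m * (Nat.centralBinom m : ℝ)^2 := by
      exact_mod_cast key_binom m h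
    have hs : Real.sqrt (m:ℝ) ^ 2 = (m:ℝ) := Real.sq_sqrt (by positivity)
    have h2 : ((4:ℝ)^m)^2 ≤ (2 * Real.sqrt m * (Nat.centralBinom m : ℝ))^2 := by
      have e : ((4:ℝ)^m)^2 = 16^m := by
        rw [← pow_mul, mul_comm, pow_mul]; norm_num
      rw [e]
      calc (16:ℝ)^m ≤ 4 * m * (Nat.centralBinom m : ℝ)^2 := h1
        _ = (2 * Real.sqrt m * (Nat.centralBinom m : ℝ))^2 := by
            rw [mul_pow, mul_pow, hs]; ring
    have h3 : (4:ℝ)^m ≤ 2 * Real.sqrt m * (Nat.centralBinom m : ℝ) := by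
      have ha : (0:ℝ) ≤ (4:ℝ)^m := by positivity
      have hb : (0:ℝ) ≤ 2 * Real.sqrt m * (Nat.centralBinom m : ℝ) := by positivity
      nlinarith [h2]
    calc (4:ℝ)^m ≤ 2 * Real.sqrt m * (Nat.centralBinom m : ℝ) := h3
      _ = (Nat.centralBinom m : ℝ) * (Real.sqrt m + Real.sqrt m) := by ring
      _ ≤ (Nat.centralBinom m : ℝ) * (Real.sqrt (m+1) + Real.sqrt m) := by
          have : Real.sqrt (m:ℝ) ≤ Real.sqrt ((m:ℝ)+1) := Real.sqrt_le_sqrt (by linarith)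
          have hC : (0:ℝ) ≤ (Nat.centralBinom m : ℝ) := by positivity
          nlinarith [this]

lemma key_sub (m : ℕ) :
    (4:ℝ)^m * (Real.sqrt (m+1) - Real.sqrt m) ≤ (Nat.centralBinom m : ℝ) := by
  have hd : (0:ℝ) ≤ Real.sqrt (m+1) - Real.sqrt m :=
    sub_nonneg.2 (Real.sqrt_le_sqrt (by linarith [Nat.cast_nonneg (α := ℝ) m]))
  have expand : (Real.sqrt (m+1) - Real.sqrt m) * (Real.sqrt (m+1) + Real.sqrt m) = 1 := by
    have e1 : Real.sqrt ((m:ℝ)+1)^2 = (m:ℝ)+1 := Real.sq_sqrt (by positivity)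
    have e2 : Real.sqrt (m:ℝ)^2 = (m:ℝ) := Real.sq_sqrt (by positivity)
    nlinarith [e1, e2]
  calc (4:ℝ)^m * (Real.sqrt (m+1) - Real.sqrt m)
      ≤ ((Nat.centralBinom m : ℝ) * (Real.sqrt (m+1) + Real.sqrt m)) *
        (Real.sqrt (m+1) - Real.sqrt m) := mul_le_mul_of_nonneg_right (binom_sqrt m) hd
    _ = (Nat.centralBinom m : ℝ) *
        ((Real.sqrt (m+1) - Real.sqrt m) * (Real.sqrt (m+1) + Real.sqrt m)) := by ring
    _ = _ := by rw [expand, mul_one]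

lemma main_ind : ∀ n : ℕ, 2^n * Real.sqrt (((n + n % 2 : ℕ) : ℝ) / 2) ≤ Afun n := by
  intro n
  induction n with
  | zero => simp [Afun]
  | succ n ih =>
    rw [A_succ]
    rcases Nat.even_or_odd n with ⟨m, hm⟩ | ⟨m, hm⟩
    · subst hm
      have e1 : ((m + m + 1 + (m + m + 1) % 2 : ℕ) : ℝ) / 2 = (m:ℝ) + 1 := by
        have h : (m + m + 1) % 2 = 1 := by omega
        rw [h]; push_cast; ring
      have e2 : ((m + m + (m + m) % 2 : ℕ) : ℝ) / 2 = (m:ℝ) := by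
        have h : (m + m) % 2 = 0 := by omega
        rw [h]; push_cast; ring
      rw [e1]; rw [e2] at ih
      have hZ : (Nat.centralBinom m : ℝ) ≤ (Zc (m + m) : ℝ) := by
        have := Zc_even m
        rw [two_mul] at this
        exact_mod_cast this
      have hp : (2:ℝ)^(m+m) = 4^m := by
        rw [show (4:ℝ) = 2^2 by norm_num, ← pow_mul, two_mul]
      have hp1 : (2:ℝ)^(m+m+1) = 2 * 4^m := by rw [pow_succ, hp]; ring
      have hk := key_sub m
      rw [hp] at ih
      rw [hp1]
      nlinarith [hk, ih, hZ]
    · subst hm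
      have e1 : ((2*m+1+1 + (2*m+1+1) % 2 : ℕ) : ℝ) / 2 = (m:ℝ) + 1 := by
        have h : (2*m+1+1) % 2 = 0 := by omega
        rw [h]; push_cast; ring
      have e2 : ((2*m+1 + (2*m+1) % 2 : ℕ) : ℝ) / 2 = (m:ℝ) + 1 := by
        have h : (2*m+1) % 2 = 1 := by omega
        rw [h]; push_cast; ring
      rw [e1]; rw [e2] at ih
      have hZ : (0:ℝ) ≤ (Zc (2*m+1) : ℝ) := by positivity
      rw [pow_succ]
      nlinarith [ih, hZ]

theorem stmt_9 (n : ℕ) :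
    Real.sqrt (n / 2) ≤
      (∑ ε : Fin n → Bool, |∑ i, (if ε i then (1 : ℝ) else -1)|) / 2 ^ n := by
  show Real.sqrt (n / 2) ≤ Afun n / 2 ^ n
  rw [le_div_iff₀ (by positivity : (0:ℝ) < 2 ^ n)]
  have hmono : Real.sqrt ((n:ℝ) / 2) ≤ Real.sqrt (((n + n % 2 : ℕ) : ℝ) / 2) := by
    apply Real.sqrt_le_sqrt
    push_cast
    have : (0:ℝ) ≤ ((n % 2 : ℕ) : ℝ) := by positivity
    linarith
  calc Real.sqrt ((n:ℝ) / 2) * 2 ^ n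
      ≤ Real.sqrt (((n + n % 2 : ℕ) : ℝ) / 2) * 2 ^ n :=
        mul_le_mul_of_nonneg_right hmono (by positivity)
    _ ≤ Afun n := by rw [mul_comm]; exact main_ind n
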